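/- Let $n \geq 2$ and let $L_1, L_2 \subset \mathbb{R}^n$ be lattices (discrete cocompact subgroups). Suppose $L_1$ contains a nonzero vector $x_0$ whose first coordinate is zero. Then there exists a sequence of nonzero vectors $y_k \in L_2$ such that the commutators $[T^{x_0}, V^{y_k}]$ converge to the identity in $\mathrm{SL}_2(\mathbb{R})^n$, where $T^x = (\begin{pmatrix} 1 & x_j \\ 0 & 1\end{pmatrix})_{j=1}^n$ and $V^y = (\begin{pmatrix} 1 & 0 \\ y_j & 1\end{pmatrix})_{j=1}^n$, and moreover the commutators are nontrivial whenever $[T^{x_0}, V^{y_k}] \neq 1$ can be arranged; consequently, if the group generated by $\{T^x : x \in L_1\}$ and $\{V^y : y \in L_2\}$ is discrete, then some such commutator is trivial. -/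

import Mathlib

open Filter
open scoped commutatorElement

/-- Topology on `SL₂(ℝ)`, induced from the space of matrices. -/
instance : TopologicalSpace (Matrix.SpecialLinearGroup (Fin 2) ℝ) :=
  TopologicalSpace.induced (fun g => (g : Matrix (Fin 2) (Fin 2) ℝ)) inferInstance

/-- The upper unipotent element `T^x ∈ SL₂(ℝ)ⁿ` attached to `x ∈ ℝⁿ`. -/
def Tmat (n : ℕ) (x : Fin n → ℝ) : Fin n → Matrix.SpecialLinearGroup (Fin 2) ℝ :=
  fun j => ⟨!![1, x j; 0, 1], by simp [Matrix.det_fin_two_of]⟩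

/-- The lower unipotent element `V^y ∈ SL₂(ℝ)ⁿ` attached to `y ∈ ℝⁿ`. -/
def Vmat (n : ℕ) (y : Fin n → ℝ) : Fin n → Matrix.SpecialLinearGroup (Fin 2) ℝ :=
  fun j => ⟨!![1, 0; y j, 1], by simp [Matrix.det_fin_two_of]⟩

open Module Submodule in
/-- A discrete `ℤ`-submodule of a finite-dimensional real normed space has rank at most
the dimension of the ambient space. -/
lemma rank_le_of_discrete {F : Type*} [NormedAddCommGroup F] [NormedSpace ℝ F]
    [FiniteDimensional ℝ F] (M : Submodule ℤ F) [DiscreteTopology M] :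
    Module.finrank ℤ M ≤ Module.finrank ℝ F := by
  let W := Submodule.span ℝ (M : Set F)
  let f := W.subtype
  let M₀ := M.comap (f.restrictScalars ℤ)
  have h_img : f '' M₀ = M := by
    rw [← LinearMap.coe_restrictScalars ℤ f, ← Submodule.map_coe (f.restrictScalars ℤ),
      Submodule.map_comap_eq_self]
    exact fun x hx ↦ LinearMap.mem_range.mpr ⟨⟨x, Submodule.subset_span hx⟩, rfl⟩
  have hd : DiscreteTopology M₀ := by
    refine DiscreteTopology.preimage_of_continuous_injective (M : Set F) ?_ (injective_subtype _)
    exact LinearMap.continuous_of_finiteDimensional f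
  have hz : IsZLattice ℝ M₀ := ⟨by
    rw [← (Submodule.map_injective_of_injective (injective_subtype _)).eq_iff, Submodule.map_span,
      Submodule.map_top, range_subtype, h_img]⟩
  have h1 : Module.finrank ℤ M₀ = Module.finrank ℝ W := ZLattice.rank ℝ M₀
  have e : M₀ ≃ₗ[ℤ] M := by
    refine (Submodule.equivMapOfInjective (f.restrictScalars ℤ) (injective_subtype _) M₀).trans
      (LinearEquiv.ofEq _ _ ?_)
    exact Submodule.map_comap_eq_self (by
      rintro x hx
      exact LinearMap.mem_range.mpr ⟨⟨x, Submodule.subset_span hx⟩, rfl⟩)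
  rw [e.symm.finrank_eq, h1]
  exact Submodule.finrank_le W

open Module Submodule in
/-- A lattice in `ℝⁿ` contains nonzero vectors all of whose coordinates away from a fixed
index `i` are smaller than any given `ε > 0`. -/
lemma exists_small (n : ℕ) (L : Submodule ℤ (Fin n → ℝ)) [DiscreteTopology L] [IsZLattice ℝ L]
    (i : Fin n) (ε : ℝ) (hε : 0 < ε) :
    ∃ y ∈ L, y ≠ 0 ∧ ∀ j : Fin n, j ≠ i → |y j| < ε := by
  by_contra hc
  push_neg at hc
  let π : (Fin n → ℝ) →ₗ[ℝ] ({j : Fin n // j ≠ i} → ℝ) := LinearMap.funLeft ℝ ℝ Subtype.val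
  have key : ∀ y ∈ L, ‖π y‖ < ε → y = 0 := by
    intro y hy hny
    by_contra h0
    obtain ⟨j, hj, hje⟩ := hc y hy h0
    have : |y j| ≤ ‖π y‖ := by
      have := norm_le_pi_norm (π y) ⟨j, hj⟩
      simpa [π, LinearMap.funLeft, Real.norm_eq_abs] using this
    linarith
  let M : Submodule ℤ _ := L.map (π.restrictScalars ℤ)
  have hd : DiscreteTopology M := by
    rw [discreteTopology_iff_isOpen_singleton_zero, isOpen_induced_iff]
    refine ⟨Metric.ball 0 ε, Metric.isOpen_ball, ?_⟩
    ext ⟨x, hx⟩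
    simp only [Set.mem_preimage, Metric.mem_ball, dist_zero_right, Set.mem_singleton_iff]
    constructor
    · intro hlt
      obtain ⟨y, hy, rfl⟩ := hx
      have := key y hy hlt
      simp [this, Subtype.ext_iff]
    · intro h0
      have : x = 0 := congrArg Subtype.val h0
      rw [this]
      simpa using hε
  have hrank : Module.finrank ℤ M ≤ Module.finrank ℝ ({j : Fin n // j ≠ i} → ℝ) :=
    rank_le_of_discrete M
  have e : L ≃ₗ[ℤ] M := by
    refine LinearEquiv.ofBijective ((π.restrictScalars ℤ).restrict
      (p := L) (q := M) (fun x hx => Submodule.mem_map_of_mem hx)) ⟨?_, ?_⟩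
    · intro x y hxy
      have : π (x - y) = 0 := by
        have := congrArg Subtype.val hxy
        simp only [LinearMap.restrict_apply] at this
        rw [map_sub, sub_eq_zero]
        exact this
      have hm : (x : Fin n → ℝ) - y ∈ L := sub_mem x.2 y.2
      have := key _ hm (by rw [this]; simpa using hε)
      exact Subtype.ext (by rwa [sub_eq_zero] at this)
    · rintro ⟨_, y, hy, rfl⟩
      exact ⟨⟨y, hy⟩, rfl⟩
  have h1 : Module.finrank ℤ L = n := by
    rw [ZLattice.rank ℝ L]
    simp
  have h2 : Module.finrank ℝ ({j : Fin n // j ≠ i} → ℝ) < n := by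
    rw [Module.finrank_pi]
    have : Fintype.card {j : Fin n // j ≠ i} < n := by
      have := Fintype.card_subtype_lt (p := fun j : Fin n => j ≠ i) (x := i) (by simp)
      simpa using this
    simpa using this
  rw [e.finrank_eq] at h1
  omega

/-- The commutator `[T^x, V^y]` computed explicitly, componentwise. -/
lemma comm_coe (n : ℕ) (x y : Fin n → ℝ) (j : Fin n) :
    ((⁅Tmat n x, Vmat n y⁆ j : Matrix.SpecialLinearGroup (Fin 2) ℝ) : Matrix (Fin 2) (Fin 2) ℝ)
      = !![1 + x j * y j + x j * x j * (y j * y j), -(x j * x j * y j);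
          x j * (y j * y j), 1 - x j * y j] := by
  set a := x j; set b := y j
  have : ⁅Tmat n x, Vmat n y⁆ j
      = Tmat n x j * Vmat n y j * (Tmat n x j)⁻¹ * (Vmat n y j)⁻¹ := by
    simp [commutatorElement_def, Pi.mul_apply, Pi.inv_apply]
  rw [this]
  simp only [Matrix.SpecialLinearGroup.coe_mul, Matrix.SpecialLinearGroup.coe_inv]
  show (!![1,a;0,1] * !![1,0;b,1] * (!![1,a;0,1]).adjugate * (!![1,0;b,1]).adjugate) = _
  simp [Matrix.adjugate_fin_two, Matrix.mul_fin_two]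
  ring_nf
  simp

/-- If `n ≥ 2`, `L₁, L₂ ⊂ ℝⁿ` are lattices and `x₀ ∈ L₁` is nonzero with first coordinate
zero, then there are nonzero `y_k ∈ L₂` with `[T^{x₀}, V^{y_k}] → 1` in `SL₂(ℝ)ⁿ`;
consequently, if the group generated by the `T^x`, `x ∈ L₁`, and `V^y`, `y ∈ L₂`, is
discrete, then `[T^{x₀}, V^{y}] = 1` for some nonzero `y ∈ L₂`. -/
theorem commutators_tendsto_one (n : ℕ) (hn : 2 ≤ n)
    (L₁ L₂ : Submodule ℤ (Fin n → ℝ))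
    [DiscreteTopology L₁] [IsZLattice ℝ L₁] [DiscreteTopology L₂] [IsZLattice ℝ L₂]
    (x₀ : Fin n → ℝ) (hx₀ : x₀ ∈ L₁) (hx₀ne : x₀ ≠ 0)
    (hx₀first : x₀ ⟨0, by omega⟩ = 0) :
    (∃ y : ℕ → Fin n → ℝ, (∀ k, y k ∈ L₂ ∧ y k ≠ 0) ∧
        Tendsto (fun k => ⁅Tmat n x₀, Vmat n (y k)⁆) atTop (nhds 1)) ∧
      (DiscreteTopology (Subgroup.closure
          ((fun x : L₁ => Tmat n x) '' Set.univ ∪ (fun y : L₂ => Vmat n y) '' Set.univ)) →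
        ∃ y ∈ L₂, y ≠ 0 ∧ ⁅Tmat n x₀, Vmat n y⁆ = 1) := by
  classical
  have hy : ∀ k : ℕ, ∃ y ∈ L₂, y ≠ 0 ∧
      ∀ j : Fin n, j ≠ ⟨0, by omega⟩ → |y j| < 1 / (k + 1) :=
    fun k => exists_small n L₂ ⟨0, by omega⟩ (1 / (k + 1)) (by positivity)
  choose y hyL hyne hysmall using hy
  have hconv : Tendsto (fun k => ⁅Tmat n x₀, Vmat n (y k)⁆) atTop (nhds 1) := by
    rw [tendsto_pi_nhds]
    intro j
    rw [nhds_induced, tendsto_comap_iff]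
    have hone : ((((1 : Fin n → Matrix.SpecialLinearGroup (Fin 2) ℝ)) j :
        Matrix.SpecialLinearGroup (Fin 2) ℝ) : Matrix (Fin 2) (Fin 2) ℝ) = 1 := by
      simp
    rw [show ((fun g : Matrix.SpecialLinearGroup (Fin 2) ℝ =>
        (g : Matrix (Fin 2) (Fin 2) ℝ)) ∘ (fun k => ⁅Tmat n x₀, Vmat n (y k)⁆ j))
        = fun k => !![1 + x₀ j * y k j + x₀ j * x₀ j * (y k j * y k j), -(x₀ j * x₀ j * y k j);
            x₀ j * (y k j * y k j), 1 - x₀ j * y k j] from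
      funext fun k => comm_coe n x₀ (y k) j, hone]
    by_cases hj : j = ⟨0, by omega⟩
    · subst hj
      rw [hx₀first]
      simpa [Matrix.one_fin_two] using
        (tendsto_const_nhds :
          Tendsto (fun _ : ℕ => (!![1, 0; 0, 1] : Matrix (Fin 2) (Fin 2) ℝ)) atTop _)
    · have hb : Tendsto (fun k => y k j) atTop (nhds 0) := by
        have h1 : Tendsto (fun k : ℕ => 1 / ((k : ℝ) + 1)) atTop (nhds 0) :=
          tendsto_one_div_add_atTop_nhds_zero_nat
        have h2 : Tendsto (fun k : ℕ => -(1 / ((k : ℝ) + 1))) atTop (nhds 0) := by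
          simpa using h1.neg
        refine tendsto_of_tendsto_of_tendsto_of_le_of_le h2 h1 (fun k => ?_) (fun k => ?_)
        · have := hysmall k j hj
          rw [abs_lt] at this
          linarith [this.1]
        · have := hysmall k j hj
          rw [abs_lt] at this
          linarith [this.2]
      have hcont : Continuous (fun b : ℝ =>
          !![1 + x₀ j * b + x₀ j * x₀ j * (b * b), -(x₀ j * x₀ j * b);
            x₀ j * (b * b), 1 - x₀ j * b]) := by
        refine continuous_matrix fun i k => ?_
        fin_cases i <;> fin_cases k <;> simp <;> fun_prop
      have := (hcont.tendsto 0).comp hb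
      simpa [Matrix.one_fin_two, Function.comp_def] using this
  refine ⟨⟨y, fun k => ⟨hyL k, hyne k⟩, hconv⟩, ?_⟩
  intro hdisc
  set H := Subgroup.closure
      ((fun x : L₁ => Tmat n x) '' Set.univ ∪ (fun y : L₂ => Vmat n y) '' Set.univ) with hH
  have hT : Tmat n x₀ ∈ H := Subgroup.subset_closure (Or.inl ⟨⟨x₀, hx₀⟩, Set.mem_univ _, rfl⟩)
  have hV : ∀ k, Vmat n (y k) ∈ H :=
    fun k => Subgroup.subset_closure (Or.inr ⟨⟨y k, hyL k⟩, Set.mem_univ _, rfl⟩)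
  have hmem : ∀ k, ⁅Tmat n x₀, Vmat n (y k)⁆ ∈ H := fun k => by
    rw [commutatorElement_def]
    exact mul_mem (mul_mem (mul_mem hT (hV k)) (inv_mem hT)) (inv_mem (hV k))
  have hconvH : Tendsto (fun k => (⟨⁅Tmat n x₀, Vmat n (y k)⁆, hmem k⟩ : H)) atTop
      (nhds (1 : H)) := by
    rw [tendsto_subtype_rng]
    exact hconv
  haveI := hdisc
  have hev : ∀ᶠ k in atTop,
      (⟨⁅Tmat n x₀, Vmat n (y k)⁆, hmem k⟩ : H) ∈ ({(1 : H)} : Set H) :=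
    hconvH ((isOpen_discrete ({(1 : H)} : Set H)).mem_nhds rfl)
  obtain ⟨k, hk⟩ := hev.exists
  refine ⟨y k, hyL k, hyne k, ?_⟩
  simpa [Subtype.ext_iff] using hk
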